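/- For the sequence x_0 = 1, x_{k+1} = x_k * exp(1/x_k), the reciprocal sequence y_k = 1/x_k satisfies y_{k+1} = y_k * exp(-y_k), and x_k / k → 1 as k → ∞. -/

import Mathlib

open Filter

theorem stmt_6 (x : ℕ → ℝ)
    (h0 : x 0 = 1)
    (hrec : ∀ k, x (k + 1) = x k * Real.exp (1 / x k)) :
    (∀ k, 1 / x (k + 1) = (1 / x k) * Real.exp (-(1 / x k))) ∧
      Tendsto (fun k : ℕ => x k / (k : ℝ)) atTop (nhds 1) := by
  have hge : ∀ k : ℕ, (k : ℝ) + 1 ≤ x k := by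
    intro k
    induction k with
    | zero => simp [h0]
    | succ n ih =>
      have hx : 0 < x n := lt_of_lt_of_le (by positivity) ih
      have h1 : 1 / x n + 1 ≤ Real.exp (1 / x n) := Real.add_one_le_exp _
      have h2 : x n * (1 / x n) = 1 := mul_one_div_cancel hx.ne'
      have : x n + 1 ≤ x (n + 1) := by
        rw [hrec]
        nlinarith
      push_cast
      linarith
  have hx : ∀ k, 0 < x k := fun k => lt_of_lt_of_le (by positivity) (hge k)
  constructor
  · intro k
    rw [hrec k, Real.exp_neg, one_div, mul_inv, one_div]
  · -- 1/x k → 0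
    have hxat : Tendsto x atTop atTop := by
      apply tendsto_atTop_mono hge
      exact tendsto_atTop_add_const_right _ 1 tendsto_natCast_atTop_atTop
    have ht0 : Tendsto (fun k => 1 / x k) atTop (nhds 0) := by
      simp only [one_div]
      exact hxat.inv_tendsto_atTop
    have htne : Tendsto (fun k => 1 / x k) atTop (nhdsWithin (0:ℝ) {(0:ℝ)}ᶜ) := by
      rw [tendsto_nhdsWithin_iff]
      exact ⟨ht0, Eventually.of_forall fun k => (one_div_pos.mpr (hx k)).ne'⟩
    have hslope : Tendsto (slope Real.exp 0) (nhdsWithin 0 {(0:ℝ)}ᶜ) (nhds 1) := by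
      have := hasDerivAt_iff_tendsto_slope.mp (Real.hasDerivAt_exp 0)
      simpa using this
    have hu : Tendsto (fun k => x (k + 1) - x k) atTop (nhds 1) := by
      have hcomp := hslope.comp htne
      apply hcomp.congr
      intro k
      have hxk := (hx k).ne'
      simp only [Function.comp_apply, slope_def_field, Real.exp_zero, sub_zero,
        hrec k, one_div, inv_inv, div_inv_eq_mul]
      ring
    have hces := hu.cesaro
    have hsum : ∀ n, ∑ i ∈ Finset.range n, (x (i + 1) - x i) = x n - 1 := by
      intro n
      rw [Finset.sum_range_sub x n, h0]
    have hinv : Tendsto (fun n : ℕ => ((n : ℝ))⁻¹) atTop (nhds 0) :=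
      tendsto_inv_atTop_zero.comp tendsto_natCast_atTop_atTop
    have heq : ∀ n : ℕ, ((n:ℝ))⁻¹ * (x n - 1) + ((n:ℝ))⁻¹ = x n / n := by
      intro n
      rcases eq_or_ne (n:ℝ) 0 with h | h
      · simp [h]
      · field_simp
        ring
    have hfin : Tendsto (fun n : ℕ => ((n:ℝ))⁻¹ * (x n - 1) + ((n:ℝ))⁻¹) atTop (nhds 1) := by
      have h2 := hces.add hinv
      simp only [hsum, smul_eq_mul, add_zero] at h2
      exact h2
    exact hfin.congr heq
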